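/- The equation ln k = (2 − k)(k − 1) has exactly one solution k̄ in the open interval (0, 1), and k̄ ∈ (0.31, 0.32). -/

import Mathlib

open Real Set Finset

noncomputable def ff (k : ℝ) : ℝ := Real.log k - (2 - k) * (k - 1)

lemma ff_deriv {x : ℝ} (hx : 0 < x) : HasDerivAt ff (1/x + 2*x - 3) x := by
  have h1 : HasDerivAt Real.log (1/x) x := by
    simpa [one_div] using Real.hasDerivAt_log hx.ne'
  have h2 : HasDerivAt (fun k : ℝ => (2 - k) * (k - 1)) (3 - 2*x) x := by
    have := ((hasDerivAt_id x).const_sub 2).mul ((hasDerivAt_id x).sub_const 1)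
    simp only [id] at this
    refine this.congr_deriv ?_; ring
  have := h1.sub h2
  refine this.congr_deriv ?_
  ring

lemma ff_cont : ContinuousOn ff (Set.Ioi (0:ℝ)) := by
  apply ContinuousOn.sub
  · exact Real.continuousOn_log.mono (fun x hx => ne_of_gt hx)
  · fun_prop

lemma ff_mono : StrictMonoOn ff (Set.Ioc (0:ℝ) (1/2)) := by
  apply strictMonoOn_of_deriv_pos
  · exact (convex_Ioc _ _)
  · exact ff_cont.mono (fun x hx => hx.1)
  · intro x hx
    rw [interior_Ioc] at hx
    rw [(ff_deriv hx.1).deriv]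
    have hx1 : 0 < (2*x - 1) * (x - 1) := by nlinarith [hx.1, hx.2]
    have : 1/x + 2*x - 3 = ((2*x - 1) * (x - 1)) / x := by
      field_simp [hx.1.ne']
      ring
    rw [this]
    exact div_pos hx1 hx.1

lemma ff_anti : StrictAntiOn ff (Set.Icc ((1:ℝ)/2) 1) := by
  apply strictAntiOn_of_deriv_neg
  · exact (convex_Icc _ _)
  · exact ff_cont.mono (fun x hx => lt_of_lt_of_le (by norm_num) hx.1)
  · intro x hx
    rw [interior_Icc] at hx
    have hx0 : (0:ℝ) < x := lt_trans (by norm_num) hx.1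
    rw [(ff_deriv hx0).deriv]
    have hx1 : (2*x - 1) * (x - 1) < 0 := by nlinarith [hx.1, hx.2]
    have : 1/x + 2*x - 3 = ((2*x - 1) * (x - 1)) / x := by
      field_simp [hx0.ne']
      ring
    rw [this]
    exact div_neg_of_neg_of_pos hx1 hx0

lemma log031 : Real.log 0.31 < -1.1661 := by
  have h2 : (0.6931471803:ℝ) < Real.log 2 := Real.log_two_gt_d9
  have heq : Real.log 0.31 = Real.log (31/50) - Real.log 2 := by
    rw [← Real.log_div (by norm_num) (by norm_num)]; norm_num
  have h := Real.abs_log_sub_add_sum_range_le (x := 0.38)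
    (by rw [abs_of_nonneg] <;> norm_num) 7
  rw [abs_le] at h
  simp only [Finset.sum_range_succ, Finset.sum_range_zero] at h
  rw [abs_of_nonneg (by norm_num)] at h
  norm_num at h
  linarith [h.2]

lemma log032 : (-1.1424:ℝ) < Real.log 0.32 := by
  have h2 : Real.log 2 < 0.6931471808 := Real.log_two_lt_d9
  have heq : Real.log 0.32 = Real.log (16/25) - Real.log 2 := by
    rw [← Real.log_div (by norm_num) (by norm_num)]; norm_num
  have h := Real.abs_log_sub_add_sum_range_le (x := 0.36)
    (by rw [abs_of_nonneg] <;> norm_num) 7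
  rw [abs_le] at h
  simp only [Finset.sum_range_succ, Finset.sum_range_zero] at h
  rw [abs_of_nonneg (by norm_num)] at h
  norm_num at h
  linarith [h.1]

lemma ff31 : ff 0.31 < 0 := by
  have := log031
  simp only [ff]
  nlinarith [this]

lemma ff32 : 0 < ff 0.32 := by
  have := log032
  simp only [ff]
  nlinarith [this]

theorem stmt_13 :
    ∃ k : ℝ, (k ∈ Set.Ioo (0:ℝ) 1 ∧ Real.log k = (2 - k) * (k - 1))
      ∧ (∀ k' ∈ Set.Ioo (0:ℝ) 1, Real.log k' = (2 - k') * (k' - 1) → k' = k)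
      ∧ k ∈ Set.Ioo (0.31 : ℝ) 0.32 := by
  -- existence via IVT
  have hcont : ContinuousOn ff (Set.Icc (0.31:ℝ) 0.32) :=
    ff_cont.mono (fun x hx => lt_of_lt_of_le (by norm_num) hx.1)
  have hsub : Set.Ioo (ff 0.31) (ff 0.32) ⊆ ff '' Set.Ioo 0.31 0.32 :=
    intermediate_value_Ioo (by norm_num) hcont
  obtain ⟨k, hk, hfk⟩ := hsub ⟨ff31, ff32⟩
  have hk01 : k ∈ Set.Ioo (0:ℝ) 1 := ⟨lt_trans (by norm_num) hk.1, lt_trans hk.2 (by norm_num)⟩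
  have hkIoc : k ∈ Set.Ioc (0:ℝ) (1/2) := ⟨hk01.1, le_of_lt (lt_trans hk.2 (by norm_num))⟩
  refine ⟨k, ⟨hk01, ?_⟩, ?_, hk⟩
  · have : ff k = 0 := hfk
    simp only [ff] at this; linarith
  · intro k' hk' heq'
    have hfk' : ff k' = 0 := by simp only [ff]; linarith [heq']
    rcases le_or_gt k' (1/2) with h | h
    · exact ff_mono.injOn ⟨hk'.1, h⟩ hkIoc (by rw [hfk', hfk])
    · exfalso
      have h1 : ff 1 = 0 := by simp [ff]
      have := ff_anti ⟨le_of_lt h, le_of_lt hk'.2⟩ ⟨by norm_num, le_refl 1⟩ hk'.2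
      rw [h1, hfk'] at this
      exact lt_irrefl 0 this
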